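/- Logarithmic growth of multiple polylogarithms at z = 1: for every word w over {x0, x1} of length r, there exists a constant C > 0 such that |Li(w; z)| ≤ C·(1 + |log(1−z)|^r) for all z ∈ (1/2, 1); in particular, Li(w; z) diverges at most of logarithmic order as z → 1⁻. -/

import Mathlib

open scoped BigOperators

namespace MZVRH

noncomputable section

/-- A word over the two-letter alphabet: `false` stands for `x0`, `true` for `x1`. -/
abbrev Word : Type := List Bool

/-- The shuffle algebra `S`: the free ℂ-vector space on words. -/
abbrev S : Type := Word →₀ ℂ

/-- The word `w` viewed as an element of `S`. -/
def wordS (w : Word) : S := Finsupp.single w 1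

/-- Shuffle product of two words, as an element of `S`. -/
def shWord : Word → Word → S
  | [], v => Finsupp.single v 1
  | u, [] => Finsupp.single u 1
  | a :: u, b :: v =>
      (shWord u (b :: v)).mapDomain (a :: ·)
        + (shWord (a :: u) v).mapDomain (b :: ·)
  termination_by u v => u.length + v.length
  decreasing_by all_goals simp [List.length_cons]

/-- The bilinear extension of the shuffle product to `S`. -/
def sh (x y : S) : S := x.sum fun u a => y.sum fun v b => (a * b) • shWord u v

/-- The word `x0^j`. -/
def x0pow (j : ℕ) : Word := List.replicate j false

/-- The word `x1^i`. -/
def x1pow (i : ℕ) : Word := List.replicate i true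

/-- A word is empty or ends in `x1`. -/
def EndsInX1 (w : Word) : Prop := w = [] ∨ w.getLast? = some true

/-- A word is empty or begins with `x0` and ends in `x1`. -/
def BeginsEndsX0X1 (w : Word) : Prop :=
  w = [] ∨ (w.head? = some false ∧ w.getLast? = some true)

/-- Membership in the subspace `S^0` spanned by the empty word and words ending in `x1`. -/
def InS0 (x : S) : Prop := ∀ w ∈ x.support, EndsInX1 w

/-- Membership in the subspace `S^{10}` spanned by the empty word and words beginning
with `x0` and ending in `x1`. -/
def InS10 (x : S) : Prop := ∀ w ∈ x.support, BeginsEndsX0X1 w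

/-- `Σ_j w_j ⧢ x0^j` for a finitely supported family `f : ℕ →₀ S`. -/
def decomp0Sum (f : ℕ →₀ S) : S := f.sum fun j w => sh w (wordS (x0pow j))

/-- `Σ_{i,j} x1^i ⧢ w_{ij} ⧢ x0^j` for a finitely supported family `f : ℕ × ℕ →₀ S`. -/
def decomp10Sum (f : ℕ × ℕ →₀ S) : S :=
  f.sum fun p w => sh (wordS (x1pow p.1)) (sh w (wordS (x0pow p.2)))

/-- `f` is a decomposition of `u` with coefficients in `S^0`. -/
def HasDecomp0 (u : S) (f : ℕ →₀ S) : Prop := (∀ j, InS0 (f j)) ∧ u = decomp0Sum f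

/-- `f` is a decomposition of `u` with coefficients in `S^{10}`. -/
def HasDecomp10 (u : S) (f : ℕ × ℕ →₀ S) : Prop :=
  (∀ p, InS10 (f p)) ∧ u = decomp10Sum f

open Classical in
/-- The regularization map `reg^0 : S → S^0`, the constant term of the decomposition
of `u` as a polynomial in `x0` with coefficients in `S^0`. -/
def reg0 (u : S) : S := if h : ∃ f, HasDecomp0 u f then h.choose 0 else 0

open Classical in
/-- The regularization map `reg^{10} : S → S^{10}`, the constant term of the decomposition
of `u` as a polynomial in `x0, x1` with coefficients in `S^{10}`. -/
def reg10 (u : S) : S := if h : ∃ f, HasDecomp10 u f then h.choose (0, 0) else 0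

/-- `τ`: reverse the word and exchange `x0` with `x1`. -/
def tau (w : Word) : Word := (w.map (fun b => !b)).reverse

/-- The composition `(k1, …, kr)` attached to a word `x0^{k1-1} x1 ⋯ x0^{kr-1} x1 ∈ S^0`. -/
def toComp : Word → List ℕ
  | [] => []
  | false :: w =>
      match toComp w with
      | [] => []
      | k :: ks => (k + 1) :: ks
  | true :: w => 1 :: toComp w

/-- Strictly decreasing tuples of positive integers `n1 > n2 > ⋯ > nr > 0`. -/
def Tuples (r : ℕ) : Type := {f : Fin r → ℕ // StrictAnti f ∧ ∀ i, 0 < f i}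

/-- The multiple polylogarithm `Li_{k1,…,kr}(z) = Σ_{n1 > ⋯ > nr > 0} z^{n1}/(n1^{k1} ⋯ nr^{kr})`,
attached to a composition `ks = (k1, …, kr)`; equal to `1` for the empty composition. -/
def LiComp (ks : List ℕ) (z : ℂ) : ℂ :=
  ∑' n : Tuples ks.length,
    (if h : 0 < ks.length then z ^ n.1 ⟨0, h⟩ else 1) /
      ∏ i : Fin ks.length, (n.1 i : ℂ) ^ ks.get i

/-- The multiple zeta value `ζ(k1,…,kr) = Σ_{n1 > ⋯ > nr > 0} 1/(n1^{k1} ⋯ nr^{kr})`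
attached to a composition; equal to `1` for the empty composition. -/
def zetaComp (ks : List ℕ) : ℂ :=
  ∑' n : Tuples ks.length, 1 / ∏ i : Fin ks.length, (n.1 i : ℂ) ^ ks.get i

/-- The ℂ-linear extension of `w ↦ Li(w; z)` to elements of `S` supported on `S^0` words. -/
def LiS0 (x : S) (z : ℂ) : ℂ := x.sum fun w c => c * LiComp (toComp w) z

/-- The ℂ-linear extension of `w ↦ ζ(w)` to elements of `S` supported on `S^{10}` words. -/
def zetaS (x : S) : ℂ := x.sum fun w c => c * zetaComp (toComp w)

open Classical in
/-- The extended multiple polylogarithm on `S`: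
`Li(u; z) = Σ_j Li(w_j; z) (log z)^j / j!` where `u = Σ_j w_j ⧢ x0^j` with `w_j ∈ S^0`. -/
def Li (u : S) (z : ℂ) : ℂ :=
  if h : ∃ f, HasDecomp0 u f then
    h.choose.sum fun j w => LiS0 w z * Complex.log z ^ j / (Nat.factorial j : ℂ)
  else 0

/-- The domain `D0 = ℂ ∖ {x ∈ ℝ : x ≥ 1}`. -/
def D0 : Set ℂ := {z | ¬ (z.im = 0 ∧ 1 ≤ z.re)}

/-- The domain `D1 = ℂ ∖ {x ∈ ℝ : x ≤ 0}`. -/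
def D1 : Set ℂ := {z | ¬ (z.im = 0 ∧ z.re ≤ 0)}

/-- The ℂ-linear extension of a word-indexed family of functions to `S`. -/
def extLin (h : Word → ℂ → ℂ) (x : S) (z : ℂ) : ℂ := x.sum fun w c => c * h w z

/-- A solution of the additive Riemann–Hilbert problem for multiple polylogarithms. -/
def RHSol (h0 h1 : Word → ℂ → ℂ) : Prop :=
  -- (0) shuffle homomorphisms with prescribed value on `x0`
  (∀ z ∈ D0 ∩ D1,
      (h0 [] z = 1 ∧ h1 [] z = 1) ∧
      (∀ u v : Word,
          extLin h0 (sh (wordS u) (wordS v)) z = h0 u z * h0 v z ∧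
          extLin h1 (sh (wordS u) (wordS v)) z = h1 u z * h1 v z) ∧
      h0 [false] z = Complex.log z ∧ h1 [false] z = Complex.log (1 - z)) ∧
  -- (1) holomorphy and the functional equation
  (∀ w : Word,
      DifferentiableOn ℂ (fun z => extLin h0 (reg0 (wordS w)) z) D0 ∧
      DifferentiableOn ℂ (fun z => extLin h1 (reg0 (wordS w)) z) D1 ∧
      ∀ z ∈ D0 ∩ D1,
        ∑ k ∈ Finset.range (w.length + 1),
            h1 (tau (w.take k)) z * h0 (w.drop k) z = zetaS (reg10 (wordS w))) ∧
  -- (2) asymptotic condition at infinity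
  (∀ w : Word,
      Filter.Tendsto (deriv fun z => extLin h0 (reg0 (wordS w)) z)
        (Bornology.cobounded ℂ ⊓ Filter.principal D0) (nhds 0) ∧
      Filter.Tendsto (deriv fun z => extLin h1 (reg0 (wordS w)) z)
        (Bornology.cobounded ℂ ⊓ Filter.principal D1) (nhds 0)) ∧
  -- (3) normalization at the origin
  (∀ w : Word, extLin h0 (reg0 (wordS w)) 0 = 0)


lemma shWord_nil_left (v : Word) : shWord [] v = Finsupp.single v 1 := by
  cases v <;> simp [shWord]

lemma shWord_nil_right (u : Word) : shWord u [] = Finsupp.single u 1 := by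
  cases u <;> simp [shWord]

lemma shWord_cons_cons (a b : Bool) (u v : Word) :
    shWord (a :: u) (b :: v) =
      (shWord u (b :: v)).mapDomain (a :: ·) + (shWord (a :: u) v).mapDomain (b :: ·) := by
  rw [shWord]

lemma mapD_swap (a b : Bool) (x : S) :
    ((x.mapDomain (· ++ [b])).mapDomain (a :: ·) : S) =
      (x.mapDomain (a :: ·)).mapDomain (· ++ [b]) := by
  rw [← Finsupp.mapDomain_comp, ← Finsupp.mapDomain_comp]
  rfl

lemma shWord_concat_concat : ∀ (u v : Word) (a b : Bool),
    shWord (u ++ [a]) (v ++ [b]) =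
      (shWord u (v ++ [b])).mapDomain (· ++ [a])
        + (shWord (u ++ [a]) v).mapDomain (· ++ [b]) := by
  suffices H : ∀ (n : ℕ) (u v : Word), u.length + v.length ≤ n → ∀ (a b : Bool),
      shWord (u ++ [a]) (v ++ [b]) =
      (shWord u (v ++ [b])).mapDomain (· ++ [a])
        + (shWord (u ++ [a]) v).mapDomain (· ++ [b]) by
    intro u v a b; exact H (u.length + v.length) u v le_rfl a b
  intro n
  induction n with
  | zero =>
    intro u v h a b
    obtain ⟨rfl, rfl⟩ : u = [] ∧ v = [] := by
      constructor <;> (apply List.eq_nil_of_length_eq_zero; omega)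
    simp only [List.nil_append, shWord_cons_cons, shWord_nil_left, shWord_nil_right,
      Finsupp.mapDomain_single, List.singleton_append]
    abel
  | succ n IH =>
    intro u v h a b
    match u, v with
    | [], [] =>
      simp only [List.nil_append, shWord_cons_cons, shWord_nil_left, shWord_nil_right,
        Finsupp.mapDomain_single, List.singleton_append]
      abel
    | [], c :: v' =>
      have hIH := IH [] v' (by simp at h ⊢; omega) a b
      simp only [List.nil_append, shWord_nil_left] at hIH
      simp only [List.nil_append, List.cons_append, shWord_cons_cons, shWord_nil_left,
        shWord_nil_right, hIH, Finsupp.mapDomain_add, Finsupp.mapDomain_single, mapD_swap,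
        List.cons_append, List.append_assoc]
      abel
    | c :: u', [] =>
      have hIH := IH u' [] (by simp at h ⊢; omega) a b
      simp only [List.nil_append, shWord_nil_right] at hIH
      simp only [List.nil_append, List.cons_append, shWord_cons_cons, shWord_nil_left,
        shWord_nil_right, hIH, Finsupp.mapDomain_add, Finsupp.mapDomain_single, mapD_swap,
        List.cons_append, List.append_assoc]
      abel
    | c :: u', d :: v' =>
      have h1 := IH u' (d :: v') (by simp at h ⊢; omega) a b
      have h2 := IH (c :: u') v' (by simp at h ⊢; omega) a b
      simp only [List.cons_append] at h1 h2 ⊢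
      rw [shWord_cons_cons, h1, h2]
      conv_rhs => rw [shWord_cons_cons, shWord_cons_cons]
      simp only [Finsupp.mapDomain_add, mapD_swap, List.cons_append]
      abel


lemma x0pow_succ' (j : ℕ) : x0pow (j + 1) = x0pow j ++ [false] :=
  List.replicate_succ'

lemma sh_zero_left (y : S) : sh 0 y = 0 := Finsupp.sum_zero_index

lemma sh_add_left (x x' y : S) : sh (x + x') y = sh x y + sh x' y := by
  unfold sh
  apply Finsupp.sum_add_index' <;> intro u
  · simp
  · intro a a'
    simp [add_mul, add_smul, Finsupp.sum_add]

lemma sh_smul_left (c : ℂ) (x y : S) : sh (c • x) y = c • sh x y := by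
  unfold sh
  rw [Finsupp.sum_smul_index (fun u => by simp), Finsupp.smul_sum]
  apply Finsupp.sum_congr
  intro u _
  rw [Finsupp.smul_sum]
  apply Finsupp.sum_congr
  intro v _
  rw [smul_smul, mul_assoc]

lemma sh_sub_left (x x' y : S) : sh (x - x') y = sh x y - sh x' y := by
  have := sh_add_left x ((-1 : ℂ) • x') y
  rw [sh_smul_left] at this
  simpa [sub_eq_add_neg] using this

lemma sh_wordS_right (x : S) (v : Word) :
    sh x (wordS v) = x.sum fun u a => a • shWord u v := by
  unfold sh wordS
  apply Finsupp.sum_congr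
  intro u _
  rw [Finsupp.sum_single_index (by simp)]
  simp

lemma sh_wordS_left (u : Word) (y : S) :
    sh (wordS u) y = y.sum fun v b => b • shWord u v := by
  unfold sh wordS
  rw [Finsupp.sum_single_index (by simp [Finsupp.sum])]
  simp

lemma sh_single_single (u v : Word) :
    sh (wordS u) (wordS v) = shWord u v := by
  rw [sh_wordS_left]
  unfold wordS
  rw [Finsupp.sum_single_index (by simp)]
  simp

lemma sh_empty_right (x : S) : sh x (wordS []) = x := by
  rw [sh_wordS_right]
  simp only [shWord_nil_right]
  conv_rhs => rw [← x.sum_single]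
  apply Finsupp.sum_congr
  intro u _
  rw [Finsupp.smul_single, smul_eq_mul, mul_one]

lemma sh_empty_left (y : S) : sh (wordS []) y = y := by
  rw [sh_wordS_left]
  simp only [shWord_nil_left]
  conv_rhs => rw [← y.sum_single]
  apply Finsupp.sum_congr
  intro v _
  rw [Finsupp.smul_single, smul_eq_mul, mul_one]

def Dword (w : Word) : S :=
  if w.getLast? = some false then Finsupp.single w.dropLast 1 else 0

def Dmap : S →ₗ[ℂ] S := Finsupp.linearCombination ℂ Dword

lemma Dmap_apply (x : S) : Dmap x = x.sum fun w c => c • Dword w :=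
  Finsupp.linearCombination_apply ℂ x

lemma Dmap_mapDomain_concat (a : Bool) (x : S) :
    Dmap (x.mapDomain (· ++ [a])) = if a = false then x else 0 := by
  rw [Finsupp.mapDomain, map_finsuppSum]
  have h1 : ∀ (w : Word) (c : ℂ),
      Dmap (Finsupp.single (w ++ [a]) c) = c • Dword (w ++ [a]) := by
    intro w c
    simp [Dmap, Finsupp.linearCombination_single]
  simp only [h1, Dword, List.getLast?_concat, List.dropLast_concat, Option.some.injEq]
  cases a with
  | false =>
    simp only [if_pos rfl]
    conv_rhs => rw [← x.sum_single]
    apply Finsupp.sum_congr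
    intro u _
    simp [Finsupp.smul_single]
  | true => simp

lemma Dmap_inS0 (x : S) (hx : InS0 x) : Dmap x = 0 := by
  rw [Dmap_apply]
  apply Finset.sum_eq_zero
  intro w hw
  rcases hx w hw with h | h
  · subst h; simp [Dword]
  · simp [Dword, h]

lemma Dmap_shWord_x0 (u : Word) (hu : EndsInX1 u) (j : ℕ) :
    Dmap (shWord u (x0pow (j + 1))) = shWord u (x0pow j) := by
  rcases hu with rfl | h
  · rw [shWord_nil_left, shWord_nil_left]
    have : Dmap (Finsupp.single (x0pow (j+1)) 1) = (1 : ℂ) • Dword (x0pow (j+1)) := by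
      simp [Dmap, Finsupp.linearCombination_single]
    rw [this, x0pow_succ']
    simp [Dword, List.getLast?_concat, List.dropLast_concat]
  · rcases List.eq_nil_or_concat u with rfl | ⟨u', b, rfl⟩
    · simp at h
    · simp only [List.concat_eq_append] at h ⊢
      rw [List.getLast?_concat] at h
      obtain rfl : b = true := by simpa using h
      rw [x0pow_succ', shWord_concat_concat, map_add, Dmap_mapDomain_concat,
        Dmap_mapDomain_concat]
      simp

lemma Dmap_sh_x0 (x : S) (hx : InS0 x) (j : ℕ) :
    Dmap (sh x (wordS (x0pow (j + 1)))) = sh x (wordS (x0pow j)) := by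
  rw [sh_wordS_right, sh_wordS_right, map_finsuppSum]
  apply Finsupp.sum_congr
  intro u hu
  rw [map_smul, Dmap_shWord_x0 u (hx u hu)]

lemma decomp0Sum_eq_range (f : ℕ →₀ S) (N : ℕ) (h : f.support ⊆ Finset.range N) :
    decomp0Sum f = ∑ j ∈ Finset.range N, sh (f j) (wordS (x0pow j)) :=
  Finsupp.sum_of_support_subset f h _ (fun j _ => sh_zero_left _)

lemma uniq_core : ∀ (n : ℕ) (g : ℕ → S), (∀ j, InS0 (g j)) →
    (∑ j ∈ Finset.range n, sh (g j) (wordS (x0pow j))) = 0 → ∀ j < n, g j = 0 := by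
  intro n
  induction n with
  | zero => intro g _ _ j hj; omega
  | succ n IH =>
    intro g hg h j hj
    have hD : (∑ j ∈ Finset.range n, sh (g (j + 1)) (wordS (x0pow j))) = 0 := by
      have := congrArg Dmap h
      rw [map_sum, map_zero, Finset.sum_range_succ'] at this
      have h0 : Dmap (sh (g 0) (wordS (x0pow 0))) = 0 := by
        have : x0pow 0 = [] := rfl
        rw [this, sh_empty_right, Dmap_inS0 _ (hg 0)]
      rw [h0, add_zero] at this
      rw [← this]
      apply Finset.sum_congr rfl
      intro i _
      rw [Dmap_sh_x0 _ (hg (i + 1))]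
    have hsucc : ∀ i < n, g (i + 1) = 0 := IH _ (fun i => hg (i + 1)) hD
    have hg0 : g 0 = 0 := by
      rw [Finset.sum_range_succ'] at h
      have : ∀ i ∈ Finset.range n, sh (g (i + 1)) (wordS (x0pow (i + 1))) = 0 := by
        intro i hi
        rw [hsucc i (Finset.mem_range.mp hi), sh_zero_left]
      rw [Finset.sum_congr rfl this] at h
      simpa [show x0pow 0 = [] from rfl, sh_empty_right] using h
    rcases Nat.eq_zero_or_pos j with rfl | hpos
    · exact hg0
    · obtain ⟨i, rfl⟩ : ∃ i, j = i + 1 := ⟨j - 1, by omega⟩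
      exact hsucc i (by omega)

lemma hasDecomp0_unique {u : S} {f f' : ℕ →₀ S}
    (hf : HasDecomp0 u f) (hf' : HasDecomp0 u f') : f = f' := by
  obtain ⟨N1, hN1⟩ := f.support.exists_nat_subset_range
  obtain ⟨N2, hN2⟩ := f'.support.exists_nat_subset_range
  set N := max N1 N2 with hN
  have h1 : decomp0Sum f = ∑ j ∈ Finset.range N, sh (f j) (wordS (x0pow j)) :=
    decomp0Sum_eq_range f N (hN1.trans (Finset.range_subset_range.mpr (le_max_left _ _)))
  have h2 : decomp0Sum f' = ∑ j ∈ Finset.range N, sh (f' j) (wordS (x0pow j)) :=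
    decomp0Sum_eq_range f' N (hN2.trans (Finset.range_subset_range.mpr (le_max_right _ _)))
  have hsum : (∑ j ∈ Finset.range N, sh (f j - f' j) (wordS (x0pow j))) = 0 := by
    have : (∑ j ∈ Finset.range N, sh (f j - f' j) (wordS (x0pow j)))
        = decomp0Sum f - decomp0Sum f' := by
      rw [h1, h2, ← Finset.sum_sub_distrib]
      exact Finset.sum_congr rfl fun j _ => sh_sub_left _ _ _
    rw [this, ← hf.2, ← hf'.2, sub_self]
  have hS0 : ∀ j, InS0 (f j - f' j) := by
    intro j w hw
    have := Finsupp.support_sub hw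
    rcases Finset.mem_union.mp this with h | h
    · exact hf.1 j w h
    · exact hf'.1 j w h
  have key : ∀ j < N, f j - f' j = 0 := uniq_core N _ hS0 hsum
  ext j w
  rcases lt_or_ge j N with h | h
  · have := key j h
    have := sub_eq_zero.mp this
    rw [this]
  · have hj1 : f j = 0 := by
      by_contra hne
      exact absurd (Finset.mem_range.mp (hN1 (Finsupp.mem_support_iff.mpr hne))) (by omega)
    have hj2 : f' j = 0 := by
      by_contra hne
      exact absurd (Finset.mem_range.mp (hN2 (Finsupp.mem_support_iff.mpr hne))) (by omega)
    rw [hj1, hj2]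

def trailF (w : Word) : ℕ := (w.reverse.takeWhile (fun b => !b)).length

lemma trailF_concat_false (u : Word) : trailF (u ++ [false]) = trailF u + 1 := by
  simp [trailF, List.reverse_append]

lemma trailF_concat_true (u : Word) : trailF (u ++ [true]) = 0 := by
  simp [trailF, List.reverse_append]

lemma exists_split (w : Word) : ∃ v, EndsInX1 v ∧ w = v ++ x0pow (trailF w) := by
  induction w using List.reverseRecOn with
  | nil => exact ⟨[], Or.inl rfl, rfl⟩
  | append_singleton u a IH =>
    cases a with
    | true =>
      refine ⟨u ++ [true], Or.inr List.getLast?_concat, ?_⟩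
      rw [trailF_concat_true]
      simp [x0pow]
    | false =>
      obtain ⟨v, hv, heq⟩ := IH
      refine ⟨v, hv, ?_⟩
      rw [trailF_concat_false, x0pow_succ', ← List.append_assoc, ← heq]

lemma mem_support_shWord_length :
    ∀ (u v w : Word), w ∈ (shWord u v).support → w.length = u.length + v.length := by
  suffices H : ∀ (n : ℕ) (u v : Word), u.length + v.length ≤ n →
      ∀ w ∈ (shWord u v).support, w.length = u.length + v.length by
    intro u v w hw; exact H (u.length + v.length) u v le_rfl w hw
  intro n
  induction n with
  | zero =>
    intro u v h w hw
    obtain ⟨rfl, rfl⟩ : u = [] ∧ v = [] := by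
      constructor <;> (apply List.eq_nil_of_length_eq_zero; omega)
    rw [shWord_nil_left] at hw
    have := Finsupp.support_single_subset hw
    simp at this
    simp [this]
  | succ n IH =>
    intro u v h w hw
    match u, v with
    | [], v =>
      rw [shWord_nil_left] at hw
      have := Finsupp.support_single_subset hw
      simp at this
      simp [this]
    | a :: u', [] =>
      rw [shWord_nil_right] at hw
      have := Finsupp.support_single_subset hw
      simp at this
      simp [this]
    | a :: u', b :: v' =>
      classical
      rw [shWord_cons_cons] at hw
      rcases Finset.mem_union.mp (Finsupp.support_add hw) with hw1 | hw1
      · obtain ⟨r, hr, rfl⟩ := Finset.mem_image.mp (Finsupp.mapDomain_support hw1)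
        have := IH u' (b :: v') (by simp at h ⊢; omega) r hr
        simp at this ⊢
        omega
      · obtain ⟨r, hr, rfl⟩ := Finset.mem_image.mp (Finsupp.mapDomain_support hw1)
        have := IH (a :: u') v' (by simp at h ⊢; omega) r hr
        simp at this ⊢
        omega

lemma shv : ∀ (n : ℕ) (v : Word), EndsInX1 v → ∃ R : S,
    shWord v (x0pow n) = Finsupp.single (v ++ x0pow n) 1 + R ∧
    ∀ z ∈ R.support, z.length = v.length + n ∧ trailF z < n := by
  intro n
  induction n with
  | zero =>
    intro v _
    refine ⟨0, ?_, by simp⟩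
    rw [show x0pow 0 = [] from rfl, shWord_nil_right]
    simp
  | succ n IH =>
    intro v hv
    rcases hv with rfl | h
    · refine ⟨0, ?_, by simp⟩
      rw [shWord_nil_left]
      simp
    · obtain ⟨v', b, rfl⟩ :
          ∃ v' b, v = v' ++ [b] := by
        rcases List.eq_nil_or_concat v with rfl | ⟨v', b, hb⟩
        · simp at h
        · exact ⟨v', b, by simpa using hb⟩
      rw [List.getLast?_concat] at h
      obtain rfl : b = true := by simpa using h
      obtain ⟨R₀, hR₀, hR₀s⟩ := IH (v' ++ [true]) (Or.inr List.getLast?_concat)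
      refine ⟨(shWord v' (x0pow (n+1))).mapDomain (· ++ [true])
          + R₀.mapDomain (· ++ [false]), ?_, ?_⟩
      · simp only [x0pow_succ', ← List.append_assoc]
        rw [shWord_concat_concat, hR₀, Finsupp.mapDomain_add, Finsupp.mapDomain_single]
        abel
      · intro z hz
        classical
        rcases Finset.mem_union.mp (Finsupp.support_add hz) with hz1 | hz1
        · obtain ⟨r, hr, rfl⟩ := Finset.mem_image.mp (Finsupp.mapDomain_support hz1)
          have hlen := mem_support_shWord_length _ _ _ hr
          constructor
          · simp [hlen, x0pow]
            omega
          · rw [trailF_concat_true]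
            omega
        · obtain ⟨r, hr, rfl⟩ := Finset.mem_image.mp (Finsupp.mapDomain_support hz1)
          obtain ⟨hlen, htr⟩ := hR₀s r hr
          constructor
          · simp [hlen]
            omega
          · rw [trailF_concat_false]
            omega

lemma inS0_zero : InS0 (0 : S) := by intro w hw; simp at hw

lemma inS0_add {x y : S} (hx : InS0 x) (hy : InS0 y) : InS0 (x + y) := by
  intro w hw
  rcases Finset.mem_union.mp (Finsupp.support_add hw) with h | h
  · exact hx w h
  · exact hy w h

lemma inS0_smul (c : ℂ) {x : S} (hx : InS0 x) : InS0 (c • x) := by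
  intro w hw
  exact hx w (Finsupp.support_smul hw)

lemma inS0_sub {x y : S} (hx : InS0 x) (hy : InS0 y) : InS0 (x - y) := by
  intro w hw
  classical
  rcases Finset.mem_union.mp (Finsupp.support_sub hw) with h | h
  · exact hx w h
  · exact hy w h

lemma decomp0Sum_single (t : ℕ) (x : S) :
    decomp0Sum (Finsupp.single t x) = sh x (wordS (x0pow t)) :=
  Finsupp.sum_single_index (sh_zero_left _)

lemma decomp0Sum_add (f g : ℕ →₀ S) :
    decomp0Sum (f + g) = decomp0Sum f + decomp0Sum g := by
  unfold decomp0Sum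
  apply Finsupp.sum_add_index' <;> intro j
  · exact sh_zero_left _
  · intro x y; exact sh_add_left _ _ _

lemma decomp0Sum_smul (c : ℂ) (f : ℕ →₀ S) :
    decomp0Sum (c • f) = c • decomp0Sum f := by
  obtain ⟨N, hN⟩ := f.support.exists_nat_subset_range
  have hN' : (c • f).support ⊆ Finset.range N := (Finsupp.support_smul).trans hN
  rw [decomp0Sum_eq_range _ N hN', decomp0Sum_eq_range f N hN, Finset.smul_sum]
  apply Finset.sum_congr rfl
  intro j _
  rw [Finsupp.smul_apply, sh_smul_left]

lemma decomp0Sum_sub (f g : ℕ →₀ S) :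
    decomp0Sum (f - g) = decomp0Sum f - decomp0Sum g := by
  have := decomp0Sum_add (f - g) g
  rw [show f - g + g = f from by abel] at this
  rw [this]; abel

lemma decomp0Sum_zero : decomp0Sum (0 : ℕ →₀ S) = 0 := Finsupp.sum_zero_index

lemma inS0_wordS_of {v : Word} (hv : EndsInX1 v) : InS0 (wordS v) := by
  intro w hw
  have := Finsupp.support_single_subset hw
  simp at this
  rwa [this]

lemma exists_decomp : ∀ (n : ℕ) (x : S), (∀ z ∈ x.support, trailF z < n) →
    ∃ f : ℕ →₀ S, (∀ j, InS0 (f j)) ∧ decomp0Sum f = x ∧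
      ∀ j, ∀ u ∈ (f j).support, ∃ z ∈ x.support, u.length + j = z.length := by
  intro n
  induction n with
  | zero =>
    intro x hx
    have hx0 : x = 0 := by
      ext w
      by_contra hne
      exact absurd (hx w (Finsupp.mem_support_iff.mpr hne)) (by omega)
    subst hx0
    exact ⟨0, fun j => by simpa using inS0_zero, decomp0Sum_zero, by simp⟩
  | succ n IH =>
    intro x
    induction x using Finsupp.induction with
    | zero =>
      intro _
      exact ⟨0, fun j => by simpa using inS0_zero, decomp0Sum_zero, by simp⟩
    | single_add z c y hzy hc IHy =>
      intro hsupp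
      have hzmem : z ∈ (Finsupp.single z c + y).support := by
        rw [Finsupp.mem_support_iff]
        simp [Finsupp.notMem_support_iff.mp hzy, hc]
      have hymem : ∀ z', z' ∈ y.support → z' ∈ (Finsupp.single z c + y).support := by
        intro z' hz'
        rw [Finsupp.mem_support_iff]
        have hne : z' ≠ z := fun h => hzy (h ▸ hz')
        simp [Finsupp.single_apply, Ne.symm hne, Finsupp.mem_support_iff.mp hz']
      obtain ⟨fy, hfy0, hfyd, hfylen⟩ := IHy (fun z' hz' => hsupp z' (hymem z' hz'))
      -- decompose the single word z
      set t := trailF z with ht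
      obtain ⟨v, hv, hsplit⟩ := exists_split z
      obtain ⟨R, hR, hRs⟩ := shv t v hv
      rw [← hsplit] at hR
      have htn : t ≤ n := by
        have := hsupp z hzmem
        omega
      obtain ⟨fR, hfR0, hfRd, hfRlen⟩ := IH R (fun z' hz' => by
        have := (hRs z' hz').2
        omega)
      refine ⟨c • Finsupp.single t (wordS v) - c • fR + fy, ?_, ?_, ?_⟩
      · intro j
        apply inS0_add
        apply inS0_sub
        · rw [Finsupp.smul_apply]
          apply inS0_smul
          rw [Finsupp.single_apply]
          split
          · exact inS0_wordS_of hv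
          · exact inS0_zero
        · rw [Finsupp.smul_apply]
          exact inS0_smul _ (hfR0 j)
        · exact hfy0 j
      · rw [decomp0Sum_add, decomp0Sum_sub, decomp0Sum_smul, decomp0Sum_smul,
          decomp0Sum_single, hfyd, hfRd, sh_single_single, hR]
        rw [smul_add]
        rw [show (c • Finsupp.single z (1:ℂ) : S) = Finsupp.single z c by
          rw [Finsupp.smul_single, smul_eq_mul, mul_one]]
        abel
      · intro j u hu
        have hsub : ((c • Finsupp.single t (wordS v) - c • fR + fy) j)
            = c • (Finsupp.single t (wordS v) j) - c • fR j + fy j := by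
          simp only [Finsupp.add_apply, Finsupp.sub_apply, Finsupp.smul_apply]
        rw [hsub] at hu
        classical
        rcases Finset.mem_union.mp (Finsupp.support_add hu) with h1 | h1
        · rcases Finset.mem_union.mp (Finsupp.support_sub h1) with h2 | h2
          · have h3 := Finsupp.support_smul h2
            rw [Finsupp.single_apply] at h3
            by_cases hjt : t = j
            · rw [if_pos hjt] at h3
              have := Finsupp.support_single_subset h3
              simp at this
              subst this
              refine ⟨z, hzmem, ?_⟩
              rw [hsplit, ← hjt]
              simp [x0pow, ht]
            · rw [if_neg hjt] at h3
              simp at h3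
          · have h3 := Finsupp.support_smul h2
            obtain ⟨z', hz', hlen⟩ := hfRlen j u h3
            refine ⟨z, hzmem, ?_⟩
            rw [hlen, (hRs z' hz').1, hsplit]
            simp [x0pow, ht]
        · obtain ⟨z', hz', hlen⟩ := hfylen j u h1
          exact ⟨z', hymem z' hz', hlen⟩

lemma exists_decomp_word (w : Word) :
    ∃ f : ℕ →₀ S, HasDecomp0 (wordS w) f ∧
      ∀ j, ∀ u ∈ (f j).support, u.length + j = w.length := by
  obtain ⟨f, h0, hd, hlen⟩ := exists_decomp (trailF w + 1) (wordS w) (fun z hz => by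
    have := Finsupp.support_single_subset hz
    simp at this
    subst this
    omega)
  refine ⟨f, ⟨h0, hd.symm⟩, ?_⟩
  intro j u hu
  obtain ⟨z, hz, hlen'⟩ := hlen j u hu
  have := Finsupp.support_single_subset hz
  simp at this
  subst this
  exact hlen'

lemma toComp_pos : ∀ (w : Word), ∀ k ∈ toComp w, 1 ≤ k := by
  intro w
  induction w with
  | nil => simp [toComp]
  | cons a w IH =>
    cases a with
    | true =>
      intro k hk
      rcases List.mem_cons.mp hk with rfl | hk
      · exact le_rfl
      · exact IH k hk
    | false =>
      intro k hk
      rw [toComp] at hk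
      rcases hcw : toComp w with _ | ⟨k', ks'⟩
      · rw [hcw] at hk; simp at hk
      · rw [hcw] at hk
        rcases List.mem_cons.mp hk with rfl | hk
        · omega
        · exact IH k (by rw [hcw]; exact List.mem_cons_of_mem _ hk)

lemma toComp_length_le : ∀ (w : Word), (toComp w).length ≤ w.length := by
  intro w
  induction w with
  | nil => simp [toComp]
  | cons a w IH =>
    cases a with
    | true => simpa [toComp] using IH
    | false =>
      rw [toComp]
      rcases hcw : toComp w with _ | ⟨k', ks'⟩
      · simp
      · simp only [List.length_cons]
        rw [hcw] at IH
        simp at IH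
        omega

-- telescoping
lemma tele_sum (N : ℕ → ℕ) (hmono : ∀ i, N (i + 1) ≤ N i) :
    ∀ m, (∑ i ∈ Finset.range m, (N i - N (i + 1))) = N 0 - N m := by
  have hle : ∀ m, N m ≤ N 0 := by
    intro m
    induction m with
    | zero => exact le_rfl
    | succ m IH => exact (hmono m).trans IH
  intro m
  induction m with
  | zero => simp
  | succ m IH =>
    rw [Finset.sum_range_succ, IH]
    have := hmono m
    have := hle m
    omega

instance tuplesZeroUnique : Unique (Tuples 0) := by
  refine ⟨⟨⟨fun i => i.elim0, ?_, fun i => i.elim0⟩⟩, ?_⟩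
  · intro a b h; exact a.elim0
  · intro a
    apply Subtype.ext
    funext i
    exact i.elim0

lemma LiComp_nil (z : ℂ) : LiComp [] z = 1 := by
  unfold LiComp
  simp only [List.length_nil]
  rw [tsum_eq_single (default : Tuples 0) (fun b hb => absurd (Subsingleton.elim b default) hb)]
  simp

lemma tsum_pi_prod (g : ℕ+ → ENNReal) :
    ∀ r : ℕ, ∑' e : Fin r → ℕ+, ∏ i, g (e i) = (∑' m, g m) ^ r := by
  intro r
  induction r with
  | zero =>
    rw [tsum_eq_single (default : Fin 0 → ℕ+) (fun b hb => absurd (Subsingleton.elim b default) hb)]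
    simp
  | succ r IH =>
    have hequiv := Equiv.tsum_eq (Fin.consEquiv (fun _ : Fin (r+1) => ℕ+))
      (fun e : Fin (r + 1) → ℕ+ => ∏ i, g (e i))
    rw [← hequiv]
    have : ∀ p : ℕ+ × (Fin r → ℕ+),
        (∏ i, g ((Fin.consEquiv (fun _ => ℕ+)) p i)) = g p.1 * ∏ i, g (p.2 i) := by
      intro p
      rw [Fin.prod_univ_succ]
      simp [Fin.consEquiv]
    rw [tsum_congr this, ENNReal.tsum_prod']
    simp only [ENNReal.tsum_mul_left (f := fun b => _)]
    rw [ENNReal.tsum_mul_right, IH, pow_succ]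
    ring

lemma liComp_abs_le (ks : List ℕ) (hks : ∀ k ∈ ks, 1 ≤ k) {z : ℝ}
    (h0 : 0 < z) (h1 : z < 1) :
    ‖LiComp ks (z : ℂ)‖ ≤ (-Real.log (1 - z)) ^ ks.length := by
  set L : ℝ := -Real.log (1 - z) with hLdef
  have hLpos : 0 < L := by
    have : Real.log (1 - z) < 0 := Real.log_neg (by linarith) (by linarith)
    simp only [hLdef]; linarith
  rcases Nat.eq_zero_or_pos ks.length with hr0 | hrpos
  · rw [List.length_eq_zero_iff.mp hr0, LiComp_nil]
    simp
  · set r := ks.length with hr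
    set F : Tuples r → ℂ := fun n =>
      (if h : 0 < r then (z : ℂ) ^ n.1 ⟨0, h⟩ else 1) /
        ∏ i : Fin r, (n.1 i : ℂ) ^ ks.get i with hF
    have hLiComp : LiComp ks (z : ℂ) = ∑' n, F n := rfl
    set N : Tuples r → ℕ → ℕ := fun n i => if h : i < r then n.1 ⟨i, h⟩ else 0 with hN
    have hNmono : ∀ n i, N n (i + 1) ≤ N n i := by
      intro n i
      by_cases h : i + 1 < r
      · have hi : i < r := by omega
        simp only [hN, dif_pos h, dif_pos hi]
        exact le_of_lt (n.2.1 (show (⟨i, hi⟩ : Fin r) < ⟨i + 1, h⟩ by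
          simp [Fin.lt_def]))
      · by_cases hi : i < r
        · simp only [hN, dif_neg h, dif_pos hi]; exact Nat.zero_le _
        · simp only [hN, dif_neg h, dif_neg hi]; exact le_rfl
    have hNlt : ∀ n i, i < r → N n (i + 1) < N n i := by
      intro n i hi
      by_cases h : i + 1 < r
      · simp only [hN, dif_pos h, dif_pos hi]
        exact n.2.1 (show (⟨i, hi⟩ : Fin r) < ⟨i + 1, h⟩ by simp [Fin.lt_def])
      · simp only [hN, dif_neg h, dif_pos hi]
        exact n.2.2 _
    set d : Tuples r → Fin r → ℕ+ := fun n i =>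
      ⟨N n i.val - N n (i.val + 1), by have := hNlt n i.val i.isLt; omega⟩ with hd
    have hd_coe : ∀ n (i : Fin r), (d n i : ℕ) = N n i.val - N n (i.val + 1) := fun n i => rfl
    have hNval : ∀ n (i : Fin r), N n i.val = n.1 i := by
      intro n i
      simp only [hN, dif_pos i.isLt]
    have hsum_d : ∀ n : Tuples r, (∑ i : Fin r, ((d n i : ℕ))) = n.1 ⟨0, hrpos⟩ := by
      intro n
      have e1 : (∑ i : Fin r, ((d n i : ℕ)))
          = ∑ i ∈ Finset.range r, (N n i - N n (i + 1)) := by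
        rw [← Fin.sum_univ_eq_sum_range (fun j => N n j - N n (j + 1)) r]
        exact Finset.sum_congr rfl fun i _ => hd_coe n i
      rw [e1, tele_sum (N n) (hNmono n) r]
      have : N n r = 0 := by simp [hN]
      rw [this, Nat.sub_zero, ← hNval n ⟨0, hrpos⟩]
    have hd_inj : Function.Injective d := by
      intro n n' h
      have key : ∀ k, ∀ i : Fin r, r - i.val ≤ k → n.1 i = n'.1 i := by
        intro k
        induction k with
        | zero => intro i hi; exact absurd hi (by have := i.isLt; omega)
        | succ k IH =>
          intro i hi
          have hsub : (d n i : ℕ) = (d n' i : ℕ) := by rw [h]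
          rw [hd_coe, hd_coe] at hsub
          have hNeq : N n (i.val + 1) = N n' (i.val + 1) := by
            by_cases hlt : i.val + 1 < r
            · have := IH ⟨i.val + 1, hlt⟩ (by simp; omega)
              simp only [hN, dif_pos hlt]
              exact this
            · simp only [hN, dif_neg hlt]
          have m1 := hNmono n i.val
          have m2 := hNmono n' i.val
          have e1 := hNval n i
          have e2 := hNval n' i
          omega
      exact Subtype.ext (funext fun i => key r i (by omega))
    have habs : ∀ n : Tuples r, ‖F n‖
        = z ^ (n.1 ⟨0, hrpos⟩) / ∏ i : Fin r, (n.1 i : ℝ) ^ ks.get i := by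
      intro n
      rw [hF]
      simp only [dif_pos hrpos]
      rw [norm_div, norm_pow, norm_prod]
      congr 1
      · rw [Complex.norm_real, Real.norm_eq_abs, abs_of_pos h0]
      · apply Finset.prod_congr rfl
        intro i _
        rw [norm_pow, Complex.norm_natCast]
    set g : ℕ+ → ENNReal := fun m => ENNReal.ofReal (z ^ (m : ℕ) / ((m : ℕ) : ℝ)) with hg
    have hterm : ∀ n : Tuples r,
        ENNReal.ofReal (‖F n‖) ≤ ∏ i, g (d n i) := by
      intro n
      rw [habs n]
      have hprod_eq : (∏ i : Fin r, (z ^ ((d n i : ℕ)) / (((d n i : ℕ)) : ℝ)))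
          = z ^ (n.1 ⟨0, hrpos⟩) / ∏ i : Fin r, (((d n i : ℕ)) : ℝ) := by
        rw [Finset.prod_div_distrib, Finset.prod_pow_eq_pow_sum, hsum_d n]
      have hdpos : (0 : ℝ) < ∏ i : Fin r, (((d n i : ℕ)) : ℝ) := by
        apply Finset.prod_pos
        intro i _
        exact_mod_cast (d n i).2
      have hle_den : (∏ i : Fin r, (((d n i : ℕ)) : ℝ))
          ≤ ∏ i : Fin r, (n.1 i : ℝ) ^ ks.get i := by
        apply Finset.prod_le_prod
        · intro i _; positivity
        · intro i _
          have hd_le : (d n i : ℕ) ≤ n.1 i := by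
            rw [hd_coe]
            have := hNval n i
            omega
          have hk : 1 ≤ ks.get i := hks _ (ks.get_mem i)
          have hn1 : 1 ≤ n.1 i := n.2.2 i
          calc (((d n i : ℕ)) : ℝ) ≤ (n.1 i : ℝ) := by exact_mod_cast hd_le
            _ ≤ (n.1 i : ℝ) ^ ks.get i := by
                apply le_self_pow₀
                · exact_mod_cast hn1
                · omega
      have hineq : z ^ (n.1 ⟨0, hrpos⟩) / ∏ i : Fin r, (n.1 i : ℝ) ^ ks.get i
          ≤ z ^ (n.1 ⟨0, hrpos⟩) / ∏ i : Fin r, (((d n i : ℕ)) : ℝ) :=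
        div_le_div_of_nonneg_left (by positivity) hdpos hle_den
      calc ENNReal.ofReal (z ^ (n.1 ⟨0, hrpos⟩) / ∏ i : Fin r, (n.1 i : ℝ) ^ ks.get i)
          ≤ ENNReal.ofReal (z ^ (n.1 ⟨0, hrpos⟩) / ∏ i : Fin r, (((d n i : ℕ)) : ℝ)) :=
            ENNReal.ofReal_le_ofReal hineq
        _ = ENNReal.ofReal (∏ i : Fin r, (z ^ ((d n i : ℕ)) / (((d n i : ℕ)) : ℝ))) := by
            rw [hprod_eq]
        _ = ∏ i, g (d n i) := by
            rw [ENNReal.ofReal_prod_of_nonneg]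
            intro i _
            positivity
    have hlog : HasSum (fun k : ℕ => z ^ (k + 1) / (k + 1)) L :=
      Real.hasSum_pow_div_log_of_abs_lt_one (by rw [abs_of_pos h0]; exact h1)
    have hgsum : (∑' m : ℕ+, g m) = ENNReal.ofReal L := by
      have h1' : ∑' m : ℕ+, g m = ∑' k : ℕ, g (Equiv.pnatEquivNat.symm k) :=
        (Equiv.pnatEquivNat.symm.tsum_eq (fun m => g m)).symm
      rw [h1']
      have hk : ∀ k : ℕ, g (Equiv.pnatEquivNat.symm k)
          = ENNReal.ofReal (z ^ (k + 1) / ((k : ℝ) + 1)) := by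
        intro k
        have : ((Equiv.pnatEquivNat.symm k : ℕ+) : ℕ) = k + 1 := by
          simp [Equiv.pnatEquivNat]
        simp only [hg, this]
        norm_num
      rw [tsum_congr hk,
        ← ENNReal.ofReal_tsum_of_nonneg (fun k => by positivity)
          (by exact_mod_cast hlog.summable), hlog.tsum_eq]
    have hbig : ∑' n : Tuples r, ENNReal.ofReal (‖F n‖) ≤ ENNReal.ofReal L ^ r := by
      calc ∑' n, ENNReal.ofReal (‖F n‖)
          ≤ ∑' n, ∏ i, g (d n i) := ENNReal.tsum_le_tsum hterm
        _ ≤ ∑' e : Fin r → ℕ+, ∏ i, g (e i) :=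
            ENNReal.tsum_comp_le_tsum_of_injective hd_inj _
        _ = (∑' m, g m) ^ r := tsum_pi_prod g r
        _ = ENNReal.ofReal L ^ r := by rw [hgsum]
    have hofReal : ∀ n, ENNReal.ofReal (‖F n‖) = (‖F n‖₊ : ENNReal) := by
      intro n
      rw [← coe_nnnorm]; exact ENNReal.ofReal_coe_nnreal
    have hne : (∑' n, (‖F n‖₊ : ENNReal)) ≠ ⊤ := by
      rw [← tsum_congr hofReal]
      exact ne_top_of_le_ne_top (ENNReal.pow_ne_top ENNReal.ofReal_ne_top) hbig
    have hsummable_n : Summable fun n => ‖F n‖₊ := ENNReal.tsum_coe_ne_top_iff_summable.mp hne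
    have hsummable : Summable fun n => ‖F n‖ := by
      have := NNReal.summable_coe.mpr hsummable_n
      simpa using this
    have h2 : ‖∑' n, F n‖ ≤ ∑' n, ‖F n‖ := by
      exact norm_tsum_le_tsum_norm hsummable
    have h3 : (∑' n, ‖F n‖) ≤ L ^ r := by
      have e1 : ENNReal.ofReal (∑' n, ‖F n‖) = ∑' n, ENNReal.ofReal ‖F n‖ :=
        ENNReal.ofReal_tsum_of_nonneg (fun n => norm_nonneg _) hsummable
      have e2 : (∑' n, ENNReal.ofReal ‖F n‖) ≤ ENNReal.ofReal (L ^ r) := by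
        calc (∑' n, ENNReal.ofReal ‖F n‖)
            = ∑' n, ENNReal.ofReal (‖F n‖) := by
              apply tsum_congr; intro n; rfl
          _ ≤ ENNReal.ofReal L ^ r := hbig
          _ = ENNReal.ofReal (L ^ r) := (ENNReal.ofReal_pow hLpos.le r).symm
      rw [← e1] at e2
      exact (ENNReal.ofReal_le_ofReal_iff (by positivity)).mp e2
    rw [hLiComp]
    exact h2.trans h3

lemma pow_le_one_add_pow {L : ℝ} (hL : 0 < L) {s t : ℕ} (h : s ≤ t) :
    L ^ s ≤ 1 + L ^ t := by
  rcases le_or_gt L 1 with hL1 | hL1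
  · have h1 : L ^ s ≤ 1 := pow_le_one₀ hL.le hL1
    have h2 : (0:ℝ) ≤ L ^ t := by positivity
    linarith
  · have h1 : L ^ s ≤ L ^ t := pow_le_pow_right₀ hL1.le h
    linarith

/-- Logarithmic growth of multiple polylogarithms at `z = 1`: for every
word `w` of length `r`, there is `C > 0` with
`|Li(w; z)| ≤ C (1 + |log(1-z)|^r)` for all `z ∈ (1/2, 1)`. -/
theorem Li_log_growth (w : Word) :
    ∃ C : ℝ, 0 < C ∧ ∀ z : ℝ, z ∈ Set.Ioo (1 / 2 : ℝ) 1 →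
      ‖Li (wordS w) (z : ℂ)‖ ≤ C * (1 + |Real.log (1 - z)| ^ w.length) := by
  obtain ⟨f, hf, hflen⟩ := exists_decomp_word w
  have hex : ∃ f', HasDecomp0 (wordS w) f' := ⟨f, hf⟩
  have hch : hex.choose = f := hasDecomp0_unique hex.choose_spec hf
  set r := w.length with hrw
  set C₀ : ℝ := ∑ j ∈ f.support, ∑ u ∈ (f j).support, ‖(f j) u‖ with hC0
  have hC0nn : 0 ≤ C₀ :=
    Finset.sum_nonneg fun j _ => Finset.sum_nonneg fun u _ => norm_nonneg _
  refine ⟨C₀ + 1, by linarith, ?_⟩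
  intro z hz
  obtain ⟨hz1, hz2⟩ := hz
  set Lr := |Real.log (1 - z)| with hLr
  have h1z : 0 < 1 - z := by linarith
  have h1z2 : 1 - z < 1 := by linarith
  have hlogneg : Real.log (1 - z) < 0 := Real.log_neg h1z h1z2
  have hLreq : Lr = -Real.log (1 - z) := abs_of_neg hlogneg
  have hLrpos : 0 < Lr := by rw [hLreq]; linarith
  have h0z : 0 < z := by linarith
  have hlogz : ‖Complex.log (z : ℂ)‖ ≤ 1 := by
    rw [← Complex.ofReal_log h0z.le, Complex.norm_real, Real.norm_eq_abs]
    have hzneg : Real.log z < 0 := Real.log_neg h0z hz2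
    rw [abs_of_neg hzneg]
    have hlt : Real.log (1/2) < Real.log z := Real.log_lt_log (by norm_num) hz1
    have hhalf : Real.log (1/2) = -Real.log 2 := by rw [one_div, Real.log_inv]
    have h2 : Real.log 2 < 1 := by
      have := Real.log_two_lt_d9
      linarith
    linarith
  have hbound1pow : (0:ℝ) < 1 + Lr ^ r := by positivity
  have hLi : Li (wordS w) (z : ℂ)
      = f.sum fun j x => LiS0 x (z : ℂ) * Complex.log (z : ℂ) ^ j / (Nat.factorial j : ℂ) := by
    rw [Li, dif_pos hex, hch]
  rw [hLi, Finsupp.sum]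
  calc ‖∑ j ∈ f.support,
        LiS0 (f j) (z:ℂ) * Complex.log (z:ℂ) ^ j / (Nat.factorial j : ℂ)‖
      ≤ ∑ j ∈ f.support,
        ‖LiS0 (f j) (z:ℂ) * Complex.log (z:ℂ) ^ j / (Nat.factorial j : ℂ)‖ :=
        norm_sum_le _ _
    _ ≤ ∑ j ∈ f.support, (∑ u ∈ (f j).support, ‖(f j) u‖) * (1 + Lr ^ r) := by
        apply Finset.sum_le_sum
        intro j hj
        have hterm1 : ‖LiS0 (f j) (z:ℂ) * Complex.log (z:ℂ) ^ j
              / (Nat.factorial j : ℂ)‖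
            ≤ ‖LiS0 (f j) (z:ℂ)‖ := by
          rw [norm_div, norm_mul, norm_pow]
          have hfac : (1:ℝ) ≤ ‖((Nat.factorial j : ℕ) : ℂ)‖ := by
            rw [Complex.norm_natCast]
            exact_mod_cast Nat.one_le_iff_ne_zero.mpr (Nat.factorial_ne_zero j)
          have hpow1 : ‖Complex.log (z:ℂ)‖ ^ j ≤ 1 :=
            pow_le_one₀ (norm_nonneg _) hlogz
          calc ‖LiS0 (f j) (z:ℂ)‖ * ‖Complex.log (z:ℂ)‖ ^ j
                / ‖((Nat.factorial j : ℕ) : ℂ)‖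
              ≤ ‖LiS0 (f j) (z:ℂ)‖ * ‖Complex.log (z:ℂ)‖ ^ j :=
                div_le_self (by positivity) hfac
            _ ≤ ‖LiS0 (f j) (z:ℂ)‖ * 1 :=
                mul_le_mul_of_nonneg_left hpow1 (norm_nonneg _)
            _ = ‖LiS0 (f j) (z:ℂ)‖ := mul_one _
        refine hterm1.trans ?_
        rw [LiS0, Finsupp.sum]
        calc ‖∑ u ∈ (f j).support, (f j) u * LiComp (toComp u) (z:ℂ)‖
            ≤ ∑ u ∈ (f j).support, ‖(f j) u * LiComp (toComp u) (z:ℂ)‖ :=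
              norm_sum_le _ _
          _ ≤ ∑ u ∈ (f j).support, ‖(f j) u‖ * (1 + Lr ^ r) := by
              apply Finset.sum_le_sum
              intro u hu
              rw [norm_mul]
              apply mul_le_mul_of_nonneg_left _ (norm_nonneg _)
              have hlen : u.length + j = r := hflen j u hu
              have hslen : (toComp u).length ≤ r := by
                have := toComp_length_le u
                omega
              have hle1 : ‖LiComp (toComp u) (z:ℂ)‖
                  ≤ (-Real.log (1 - z)) ^ (toComp u).length :=
                liComp_abs_le (toComp u) (toComp_pos u) h0z hz2
              rw [← hLreq] at hle1
              exact hle1.trans (pow_le_one_add_pow hLrpos hslen)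
          _ = (∑ u ∈ (f j).support, ‖(f j) u‖) * (1 + Lr ^ r) :=
              (Finset.sum_mul _ _ _).symm
    _ = C₀ * (1 + Lr ^ r) := (Finset.sum_mul _ _ _).symm
    _ ≤ (C₀ + 1) * (1 + Lr ^ r) := by nlinarith

end

end MZVRH
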